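/- Suppose dim_ℂ R = 4. Then for Q ∈ S ⊗ R one has β(Q, Q) = 0 if and only if there exist s₁, s₂ ∈ S and r₁, r₂ ∈ R with ω(r₁, r₂) = 0 such that Q = s₁ ⊗ r₁ + s₂ ⊗ r₂. In particular a rank-two supercharge Q = ξ₁ ⊗ r₁ + ξ₂ ⊗ r₂ is square-zero precisely when the single quadratic condition ω(r₁, r₂) = 0 holds, and every square-zero supercharge of the N=(2,0) supertranslation algebra is either minimal (rank ≤ 1) or nonminimal (rank two with ω(r₁, r₂) = 0). -/

import Mathlib

open TensorProduct ExteriorAlgebra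

/-- The wedge `s ∧ t` as an element of the second exterior power `⋀[ℂ]^2 S`. -/
noncomputable def wedge {S : Type} [AddCommGroup S] [Module ℂ S] (s t : S) : ⋀[ℂ]^2 S :=
  ⟨ι ℂ s * ι ℂ t, by
    show _ ∈ LinearMap.range (ι ℂ : S →ₗ[ℂ] ExteriorAlgebra ℂ S) ^ 2
    rw [pow_two]
    exact Submodule.mul_mem_mul (LinearMap.mem_range_self _ s) (LinearMap.mem_range_self _ t)⟩

noncomputable def biAlt {S : Type} [AddCommGroup S] [Module ℂ S]
    (φ ψ : Module.Dual ℂ S) : S [⋀^Fin 2]→ₗ[ℂ] ℂ :=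
  (Matrix.detRowAlternating : ((Fin 2) → ℂ) [⋀^Fin 2]→ₗ[ℂ] ℂ).compLinearMap
    (LinearMap.pi ![φ, ψ])

noncomputable def extractF {S : Type} [AddCommGroup S] [Module ℂ S]
    (φ ψ : Module.Dual ℂ S) : ExteriorAlgebra ℂ S →ₗ[ℂ] ℂ :=
  ExteriorAlgebra.liftAlternating (Function.update (fun _ => 0) 2 (biAlt φ ψ))

lemma extractF_wedge {S : Type} [AddCommGroup S] [Module ℂ S]
    (φ ψ : Module.Dual ℂ S) (s t : S) :
    extractF φ ψ (ι ℂ s * ι ℂ t) = φ s * ψ t - ψ s * φ t := by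
  rw [extractF, liftAlternating_ι_mul, liftAlternating_ι]
  simp only [show Nat.succ 1 = 2 from rfl, Function.update_self]
  simp only [biAlt, AlternatingMap.curryLeft_apply_apply, AlternatingMap.compLinearMap_apply]
  have hdet : ∀ v : Fin 2 → (Fin 2 → ℂ),
      Matrix.detRowAlternating v = Matrix.det (Matrix.of v) := fun _ => rfl
  rw [hdet, Matrix.det_fin_two]
  simp [LinearMap.pi_apply, Matrix.vecHead, Matrix.vecTail]

lemma exists_tensor_decomp {S R : Type} [AddCommGroup S] [Module ℂ S]
    [AddCommGroup R] [Module ℂ R] [FiniteDimensional ℂ S] (Q : S ⊗[ℂ] R) :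
    ∃ r : Fin (Module.finrank ℂ S) → R,
      Q = ∑ i, (Module.finBasis ℂ S) i ⊗ₜ[ℂ] r i := by
  set b := Module.finBasis ℂ S
  let Φ : (Fin (Module.finrank ℂ S) → R) →ₗ[ℂ] S ⊗[ℂ] R :=
    { toFun := fun r => ∑ i, b i ⊗ₜ[ℂ] r i
      map_add' := fun x y => by simp [tmul_add, Finset.sum_add_distrib]
      map_smul' := fun c x => by simp [tmul_smul, Finset.smul_sum] }
  have hsurj : Q ∈ LinearMap.range Φ := by
    have htop : LinearMap.range Φ = ⊤ := by
      rw [← top_le_iff, ← span_tmul_eq_top ℂ S R, Submodule.span_le]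
      rintro x ⟨s, r, rfl⟩
      refine ⟨fun i => b.repr s i • r, ?_⟩
      show ∑ i, b i ⊗ₜ[ℂ] (b.repr s i • r) = s ⊗ₜ[ℂ] r
      calc ∑ i, b i ⊗ₜ[ℂ] (b.repr s i • r)
          = ∑ i, (b.repr s i • b i) ⊗ₜ[ℂ] r := by simp [tmul_smul, smul_tmul]
        _ = (∑ i, b.repr s i • b i) ⊗ₜ[ℂ] r := by rw [sum_tmul]
        _ = s ⊗ₜ[ℂ] r := by rw [b.sum_repr]
    rw [htop]; trivial
  obtain ⟨r, hr⟩ := hsurj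
  exact ⟨r, hr.symm⟩

/-- If `dim_ℂ R = 4` (the `N=(2,0)` case), then `Q ∈ S ⊗ R` satisfies `β Q Q = 0` if and only
if `Q = s₁ ⊗ r₁ + s₂ ⊗ r₂` with `ω r₁ r₂ = 0`: every square-zero supercharge is either minimal
(rank ≤ 1) or nonminimal (rank two, subject to the single quadratic condition `ω r₁ r₂ = 0`). -/
theorem square_zero_iff_rank_two_isotropic_of_dim_four
    {S R : Type} [AddCommGroup S] [Module ℂ S] [FiniteDimensional ℂ S]
    [AddCommGroup R] [Module ℂ R] [FiniteDimensional ℂ R]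
    (hR : Module.finrank ℂ R = 4)
    (ω : R →ₗ[ℂ] R →ₗ[ℂ] ℂ)
    (halt : ∀ r : R, ω r r = 0)
    (hnd : ∀ r : R, (∀ r' : R, ω r r' = 0) → r = 0)
    (β : (S ⊗[ℂ] R) →ₗ[ℂ] (S ⊗[ℂ] R) →ₗ[ℂ] ⋀[ℂ]^2 S)
    (hβ : ∀ (s s' : S) (r r' : R),
      β (s ⊗ₜ[ℂ] r) (s' ⊗ₜ[ℂ] r') = ω r r' • wedge s s')
    (Q : S ⊗[ℂ] R) :
    β Q Q = 0 ↔
      ∃ (s₁ s₂ : S) (r₁ r₂ : R),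
        ω r₁ r₂ = 0 ∧ Q = s₁ ⊗ₜ[ℂ] r₁ + s₂ ⊗ₜ[ℂ] r₂ := by
  have hskew : ∀ x y : R, ω y x = - ω x y := by
    intro x y
    have h1 := halt (x + y)
    simp only [map_add, LinearMap.add_apply] at h1
    rw [halt, halt] at h1
    linear_combination h1
  constructor
  · intro h
    set n := Module.finrank ℂ S with hn
    set b := Module.finBasis ℂ S with hb
    obtain ⟨r, hQ⟩ := exists_tensor_decomp Q
    have hexp : (∑ i, ∑ j, ω (r i) (r j) • wedge (b i) (b j)) = (0 : ⋀[ℂ]^2 S) := by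
      rw [← h, hQ]
      simp only [map_sum, LinearMap.sum_apply, hβ]
      rw [Finset.sum_comm]
    have hω0 : ∀ k l, ω (r k) (r l) = 0 := by
      intro k l
      set g : ⋀[ℂ]^2 S →ₗ[ℂ] ℂ :=
        (extractF (b.coord k) (b.coord l)).comp (Submodule.subtype _) with hg
      have hgw : ∀ s t : S, g (wedge s t)
          = (b.coord k) s * (b.coord l) t - (b.coord l) s * (b.coord k) t :=
        fun s t => extractF_wedge _ _ s t
      have h2 := congrArg g hexp
      simp only [map_sum, map_smul, map_zero, hgw, Module.Basis.coord_apply, Module.Basis.repr_self,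
        Finsupp.single_apply, smul_eq_mul, mul_sub, mul_ite, mul_one, mul_zero,
        Finset.sum_sub_distrib, Finset.sum_ite_eq, Finset.sum_ite_eq',
        Finset.mem_univ, if_true] at h2
      have h3 := hskew (r k) (r l)
      linear_combination h2/2 + h3/2
    set W := Submodule.span ℂ (Set.range r) with hW
    have hWiso : ∀ x ∈ W, ∀ y ∈ W, ω x y = 0 := by
      have h1 : ∀ j, W ≤ LinearMap.ker (ω.flip (r j)) := fun j =>
        Submodule.span_le.2 (by
          rintro x ⟨i, rfl⟩
          simp only [SetLike.mem_coe, LinearMap.mem_ker, LinearMap.flip_apply]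
          exact hω0 i j)
      intro x hx y hy
      have h2 : W ≤ LinearMap.ker (ω x) := Submodule.span_le.2 (by
        rintro y ⟨j, rfl⟩
        have := h1 j hx
        simpa only [SetLike.mem_coe, LinearMap.mem_ker, LinearMap.flip_apply] using this)
      exact h2 hy
    -- finrank W ≤ 2
    have hWle : Module.finrank ℂ W ≤ 2 := by
      set ψm : R →ₗ[ℂ] Module.Dual ℂ W := (Submodule.dualRestrict W).comp ω with hψm
      have hωinj : Function.Injective ω := by
        rw [← LinearMap.ker_eq_bot, eq_bot_iff]
        intro x hx
        simp only [LinearMap.mem_ker] at hx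
        exact hnd x (fun r' => by rw [hx]; rfl)
      have hωsurj : Function.Surjective (ω : R →ₗ[ℂ] Module.Dual ℂ R) := by
        have heq : Module.finrank ℂ R = Module.finrank ℂ (Module.Dual ℂ R) :=
          (Subspace.dual_finrank_eq).symm
        exact (LinearMap.injective_iff_surjective_of_finrank_eq_finrank heq).1 hωinj
      have hψsurj : Function.Surjective ψm := by
        rw [hψm, LinearMap.coe_comp]
        exact (Subspace.dualRestrict_surjective (W := W)).comp hωsurj
      have hker : W ≤ LinearMap.ker ψm := by
        intro x hx
        simp only [LinearMap.mem_ker, hψm, LinearMap.comp_apply]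
        ext w
        exact hWiso x hx w w.2
      have hrank := LinearMap.finrank_range_add_finrank_ker ψm
      have hrange : LinearMap.range ψm = ⊤ := LinearMap.range_eq_top.2 hψsurj
      rw [hrange, finrank_top, Subspace.dual_finrank_eq, hR] at hrank
      have h3 : Module.finrank ℂ W ≤ Module.finrank ℂ (LinearMap.ker ψm) :=
        Submodule.finrank_mono hker
      omega
    set m := Module.finrank ℂ W with hm
    set bW := Module.finBasis ℂ W with hbW
    set w : Fin 2 → R := fun j => if h : (j : ℕ) < m then (bW ⟨j, h⟩ : R) else 0 with hw
    have hwW : ∀ j, w j ∈ W := by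
      intro j
      rw [hw]; dsimp only
      split
      · exact SetLike.coe_mem _
      · exact W.zero_mem
    have hmemset : ∀ j : Fin 2, w j ∈ ({w 0, w 1} : Set R) := by
      intro j
      fin_cases j <;> simp
    have hspan : ∀ x : W, (x : R) ∈ Submodule.span ℂ ({w 0, w 1} : Set R) := by
      intro x
      have hx : (x : R) = ∑ k, bW.repr x k • (bW k : R) := by
        conv_lhs => rw [← bW.sum_repr x]
        simp only [Submodule.coe_sum, Submodule.coe_smul]
      rw [hx]
      refine Submodule.sum_mem _ fun k _ => Submodule.smul_mem _ _ (Submodule.subset_span ?_)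
      have hk2 : (k : ℕ) < 2 := lt_of_lt_of_le k.2 hWle
      have heq : (bW k : R) = w ⟨(k : ℕ), hk2⟩ := by
        rw [hw]; dsimp only
        rw [dif_pos (show ((⟨(k : ℕ), hk2⟩ : Fin 2) : ℕ) < m from k.2)]
      rw [heq]; exact hmemset _
    have hri : ∀ i, ∃ av cv : ℂ, av • w 0 + cv • w 1 = r i := by
      intro i
      have hmem : r i ∈ W := Submodule.subset_span ⟨i, rfl⟩
      exact Submodule.mem_span_pair.1 (hspan ⟨r i, hmem⟩)
    choose av cv hac using hri
    refine ⟨∑ i, av i • b i, ∑ i, cv i • b i, w 0, w 1, hWiso _ (hwW 0) _ (hwW 1), ?_⟩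
    rw [hQ]
    calc ∑ i, b i ⊗ₜ[ℂ] r i
        = ∑ i, (av i • (b i ⊗ₜ[ℂ] w 0) + cv i • (b i ⊗ₜ[ℂ] w 1)) := by
          refine Finset.sum_congr rfl fun i _ => ?_
          rw [← hac i, tmul_add, tmul_smul, tmul_smul]
      _ = (∑ i, av i • b i) ⊗ₜ[ℂ] w 0 + (∑ i, cv i • b i) ⊗ₜ[ℂ] w 1 := by
          rw [Finset.sum_add_distrib, sum_tmul, sum_tmul]
          simp [smul_tmul']
  · rintro ⟨s₁, s₂, r₁, r₂, h0, rfl⟩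
    have h21 : ω r₂ r₁ = 0 := by rw [hskew]; rw [h0]; ring
    simp only [map_add, LinearMap.add_apply, hβ, halt, h0, h21, zero_smul, add_zero, zero_add]
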